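/- Every maximal commuting family of a finite set L with |L| > 1 has exactly |L| - 1 elements. -/
import Mathlib


open Finset

/-- A commuting family of subsets of `L`. -/
def IsCommFamOn {α : Type*} [DecidableEq α] (L : Finset α) (F : Finset (Finset α)) : Prop :=
  (∀ I ∈ F, I ⊆ L) ∧ (∀ I ∈ F, 1 < I.card) ∧
    ∀ I ∈ F, ∀ J ∈ F, I ≠ J → Disjoint I J ∨ I ⊂ J ∨ J ⊂ I

/-- A maximal commuting family of `L`. -/
def IsMaxCommFamOn {α : Type*} [DecidableEq α] (L : Finset α) (F : Finset (Finset α)) : Prop :=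
  IsCommFamOn L F ∧ ∀ G, IsCommFamOn L G → F ⊆ G → G = F

private lemma flip_rel {α : Type*} [DecidableEq α] {I J : Finset α}
    (h : Disjoint I J ∨ I ⊂ J ∨ J ⊂ I) : Disjoint J I ∨ J ⊂ I ∨ I ⊂ J := by
  rcases h with h | h | h
  · exact Or.inl h.symm
  · exact Or.inr (Or.inr h)
  · exact Or.inr (Or.inl h)

private lemma mem_of_compat {α : Type*} [DecidableEq α] {L : Finset α} {F : Finset (Finset α)}
    (h : IsMaxCommFamOn L F) {J : Finset α} (hJL : J ⊆ L) (hJc : 1 < J.card)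
    (hcomp : ∀ I ∈ F, I ≠ J → Disjoint I J ∨ I ⊂ J ∨ J ⊂ I) : J ∈ F := by
  obtain ⟨⟨h1, h2, h3⟩, hmax⟩ := h
  have hG : IsCommFamOn L (insert J F) := by
    refine ⟨?_, ?_, ?_⟩
    · intro I hI
      rcases Finset.mem_insert.mp hI with rfl | hI
      · exact hJL
      · exact h1 I hI
    · intro I hI
      rcases Finset.mem_insert.mp hI with rfl | hI
      · exact hJc
      · exact h2 I hI
    · intro I hI K hK hne
      rcases Finset.mem_insert.mp hI with hIJ | hIF
      · rcases Finset.mem_insert.mp hK with hKJ | hKF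
        · exact absurd (hIJ.trans hKJ.symm) hne
        · subst hIJ
          exact flip_rel (hcomp K hKF (Ne.symm hne))
      · rcases Finset.mem_insert.mp hK with hKJ | hKF
        · subst hKJ
          exact hcomp I hIF hne
        · exact h3 I hIF K hKF hne
  have := hmax _ hG (Finset.subset_insert _ _)
  rw [← this]
  exact Finset.mem_insert_self _ _

private lemma restrict_max {α : Type*} [DecidableEq α] {L C : Finset α} {F : Finset (Finset α)}
    (h : IsMaxCommFamOn L F) (hC : C ∈ F) :
    IsMaxCommFamOn C (F.filter (· ⊆ C)) := by
  obtain ⟨⟨h1, h2, h3⟩, hmax⟩ := h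
  constructor
  · refine ⟨?_, ?_, ?_⟩
    · intro I hI; exact (Finset.mem_filter.mp hI).2
    · intro I hI; exact h2 I (Finset.mem_filter.mp hI).1
    · intro I hI J hJ hne
      exact h3 I (Finset.mem_filter.mp hI).1 J (Finset.mem_filter.mp hJ).1 hne
  · intro G hG hFG
    have hmix : ∀ I ∈ F, ∀ J ∈ G, I ≠ J → Disjoint I J ∨ I ⊂ J ∨ J ⊂ I := by
      intro I hI J hJ hne
      by_cases hIC : I ⊆ C
      · exact hG.2.2 I (hFG (Finset.mem_filter.mpr ⟨hI, hIC⟩)) J hJ hne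
      · have hICne : I ≠ C := fun h => hIC (h ▸ subset_rfl)
        rcases h3 I hI C hC hICne with hd | hs | hs
        · exact Or.inl (hd.mono_right (hG.1 J hJ))
        · exact absurd hs.subset hIC
        · exact Or.inr (Or.inr (lt_of_le_of_lt (hG.1 J hJ) hs))
    have hH : IsCommFamOn L (F ∪ G) := by
      refine ⟨?_, ?_, ?_⟩
      · intro I hI
        rcases Finset.mem_union.mp hI with hI | hI
        · exact h1 I hI
        · exact (hG.1 I hI).trans (h1 C hC)
      · intro I hI
        rcases Finset.mem_union.mp hI with hI | hI
        · exact h2 I hI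
        · exact hG.2.1 I hI
      · intro I hI J hJ hne
        rcases Finset.mem_union.mp hI with hI | hI <;> rcases Finset.mem_union.mp hJ with hJ | hJ
        · exact h3 I hI J hJ hne
        · exact hmix I hI J hJ hne
        · exact flip_rel (hmix J hJ I hI (Ne.symm hne))
        · exact hG.2.2 I hI J hJ hne
    have hFU := hmax _ hH Finset.subset_union_left
    apply subset_antisymm
    · intro I hI
      exact Finset.mem_filter.mpr ⟨hFU ▸ Finset.mem_union_right _ hI, hG.1 I hI⟩
    · exact hFG

private lemma card_aux {α : Type*} [DecidableEq α] :
    ∀ n (L : Finset α) (F : Finset (Finset α)), L.card ≤ n → 1 < L.card →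
      IsMaxCommFamOn L F → F.card = L.card - 1 := by
  intro n
  induction n with
  | zero => intro L F hn hL _; omega
  | succ n ih =>
    intro L F hn hL hF
    have hLF : L ∈ F :=
      mem_of_compat hF subset_rfl hL
        (fun I hI hne => Or.inr (Or.inl (lt_of_le_of_ne (hF.1.1 I hI) hne)))
    by_cases hE : (F.erase L).Nonempty
    · obtain ⟨C0, hC0e, hmaxc⟩ := Finset.exists_max_image (F.erase L) Finset.card hE
      have hC0F : C0 ∈ F := Finset.mem_of_mem_erase hC0e
      have hC0ne : C0 ≠ L := Finset.ne_of_mem_erase hC0e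
      have hC0L : C0 ⊆ L := hF.1.1 C0 hC0F
      have hC0c : 1 < C0.card := hF.1.2.1 C0 hC0F
      have hC0lt : C0.card < L.card := Finset.card_lt_card (lt_of_le_of_ne hC0L hC0ne)
      set T := L \ C0 with hT
      have hTcard : T.card = L.card - C0.card := Finset.card_sdiff_of_subset hC0L
      have hdisC0T : Disjoint C0 T := Finset.disjoint_sdiff
      have hTL : T ⊆ L := Finset.sdiff_subset
      have hkey : ∀ I ∈ F, I ≠ L → I ⊆ C0 ∨ I ⊆ T := by
        intro I hIF hIne
        by_cases hIC : I = C0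
        · exact Or.inl (hIC ▸ subset_rfl)
        rcases hF.1.2.2 I hIF C0 hC0F hIC with hd | hs | hs
        · refine Or.inr (fun a ha => Finset.mem_sdiff.mpr ⟨hF.1.1 I hIF ha, fun hc => ?_⟩)
          exact (Finset.disjoint_left.mp hd) ha hc
        · exact Or.inl hs.subset
        · exact absurd (Finset.card_lt_card hs)
            (not_lt.mpr (hmaxc I (Finset.mem_erase.mpr ⟨hIne, hIF⟩)))
      by_cases hTc : 1 < T.card
      · -- two children partition L
        have hTneL : T ≠ L := by
          intro h
          obtain ⟨a, ha⟩ := Finset.card_pos.mp (by omega : 0 < C0.card)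
          exact (Finset.mem_sdiff.mp (h ▸ hC0L ha)).2 ha
        have hTF : T ∈ F := by
          refine mem_of_compat hF hTL hTc ?_
          intro I hIF hIne
          by_cases hIL : I = L
          · subst hIL
            exact Or.inr (Or.inr (lt_of_le_of_ne hTL hTneL))
          · rcases hkey I hIF hIL with h | h
            · exact Or.inl ((hdisC0T.mono_left h).symm.mono_left subset_rfl).symm
            · exact Or.inr (Or.inl (lt_of_le_of_ne h hIne))
        have hF0 := restrict_max hF hC0F
        have hF1 := restrict_max hF hTF
        have hTlt : T.card < L.card := Finset.card_lt_card (lt_of_le_of_ne hTL hTneL)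
        have hc0 := ih C0 _ (by omega) hC0c hF0
        have hc1 := ih T _ (by omega) hTc hF1
        have hsplit : F = insert L ((F.filter (· ⊆ C0)) ∪ (F.filter (· ⊆ T))) := by
          ext I
          simp only [Finset.mem_insert, Finset.mem_union, Finset.mem_filter]
          constructor
          · intro hI
            by_cases hIL : I = L
            · exact Or.inl hIL
            · rcases hkey I hI hIL with h | h
              · exact Or.inr (Or.inl ⟨hI, h⟩)
              · exact Or.inr (Or.inr ⟨hI, h⟩)
          · rintro (rfl | ⟨h, _⟩ | ⟨h, _⟩)
            · exact hLF
            · exact h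
            · exact h
        have hLnot : L ∉ (F.filter (· ⊆ C0)) ∪ (F.filter (· ⊆ T)) := by
          simp only [Finset.mem_union, Finset.mem_filter]
          rintro (⟨_, h⟩ | ⟨_, h⟩)
          · exact absurd (Finset.card_le_card h) (by omega)
          · exact absurd (Finset.card_le_card h) (by omega)
        have hdisj : Disjoint (F.filter (· ⊆ C0)) (F.filter (· ⊆ T)) := by
          rw [Finset.disjoint_left]
          intro I hI hI'
          have h1 := (Finset.mem_filter.mp hI).2
          have h2 := (Finset.mem_filter.mp hI').2
          have hc := hF.1.2.1 I (Finset.mem_filter.mp hI).1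
          obtain ⟨a, ha⟩ := Finset.card_pos.mp (by omega : 0 < I.card)
          exact Finset.disjoint_left.mp hdisC0T (h1 ha) (h2 ha)
        rw [hsplit, Finset.card_insert_of_notMem hLnot,
          Finset.card_union_of_disjoint hdisj, hc0, hc1]
        omega
      · -- T is a single point
        have hTc1 : T.card = 1 := by omega
        have hfe : F.filter (· ⊆ C0) = F.erase L := by
          ext I
          simp only [Finset.mem_filter, Finset.mem_erase]
          constructor
          · rintro ⟨hIF, hIC⟩
            refine ⟨fun h => ?_, hIF⟩
            subst h
            exact absurd (Finset.card_le_card hIC) (by omega)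
          · rintro ⟨hne, hIF⟩
            refine ⟨hIF, ?_⟩
            rcases hkey I hIF hne with h | h
            · exact h
            · have hc := hF.1.2.1 I hIF
              have := Finset.card_le_card h
              omega
        have hF0 := restrict_max hF hC0F
        rw [hfe] at hF0
        have hc0 := ih C0 _ (by omega) hC0c hF0
        have he : (F.erase L).card = F.card - 1 := Finset.card_erase_of_mem hLF
        have hFpos : 0 < F.card := Finset.card_pos.mpr ⟨L, hLF⟩
        omega
    · -- F = {L}
      have hFL : F = {L} := by
        apply Finset.eq_singleton_iff_unique_mem.mpr
        refine ⟨hLF, fun I hI => ?_⟩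
        by_contra h
        exact hE ⟨I, Finset.mem_erase.mpr ⟨h, hI⟩⟩
      have hL2 : L.card = 2 := by
        by_contra h
        have h3 : 2 < L.card := by omega
        obtain ⟨Tt, hTtL, hTtc⟩ := Finset.exists_subset_card_eq (by omega : 2 ≤ L.card)
        have hTtF : Tt ∈ F := by
          refine mem_of_compat hF hTtL (by omega) ?_
          intro I hI hne
          have : I = L := by rw [hFL] at hI; exact Finset.mem_singleton.mp hI
          subst this
          exact Or.inr (Or.inr (lt_of_le_of_ne hTtL (by intro h'; rw [h'] at hTtc; omega)))
        rw [hFL] at hTtF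
        have hh := Finset.mem_singleton.mp hTtF
        rw [hh] at hTtc
        omega
      rw [hFL, hL2, Finset.card_singleton]

/-- Every maximal commuting family of a finite set `L` with `|L| > 1` has
exactly `|L| - 1` elements. -/
theorem card_maxCommFam {α : Type*} [DecidableEq α] (L : Finset α)
    (F : Finset (Finset α)) (hL : 1 < L.card) (hF : IsMaxCommFamOn L F) :
    F.card = L.card - 1 :=
  card_aux L.card L F le_rfl hL hF
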